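/- Derivative of the KL divergence from the marginal of an exponential family to a fixed margin: with the exponential family G(θ)(x,y) = exp(θ·T(x,y) − ψ(θ)) p₁(x)p₂(y), ψ(θ) = log(∑_{x,y} exp(θ·T(x,y)) p₁(x)p₂(y)), marginal G₁(θ)(x) = ∑_z G(θ)(x,z), a fixed positive density r₁ on Ω₁, and t ↦ θ(t) differentiable at t₀, the function t ↦ KL(G₁(θ(t)) ‖ r₁) is differentiable at t₀ with derivative −∑_j ( ∑_x G₁(θ(t₀))(x) · ( ∑_z (T_j(x,z) − E_{G(θ(t₀))}[T_j]) · G(θ(t₀))(x,z)/G₁(θ(t₀))(x) ) · log( r₁(x)/G₁(θ(t₀))(x) ) ) · θ'_j(t₀). -/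

import Mathlib

/-- Log-partition function of the exponential family on a product space with
reference density `p₁ ⊗ p₂`. -/
noncomputable def logPartition2 {Ω₁ Ω₂ : Type*} [Fintype Ω₁] [Fintype Ω₂] {d : ℕ}
    (p₁ : Ω₁ → ℝ) (p₂ : Ω₂ → ℝ) (T : Ω₁ × Ω₂ → Fin d → ℝ) (θ : Fin d → ℝ) : ℝ :=
  Real.log (∑ x, ∑ y, Real.exp (∑ j, θ j * T (x, y) j) * (p₁ x * p₂ y))

/-- The exponential family `G(θ)(x,y) = exp(θ·T(x,y) - ψ(θ)) · p₁(x) p₂(y)`. -/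
noncomputable def expFamily2 {Ω₁ Ω₂ : Type*} [Fintype Ω₁] [Fintype Ω₂] {d : ℕ}
    (p₁ : Ω₁ → ℝ) (p₂ : Ω₂ → ℝ) (T : Ω₁ × Ω₂ → Fin d → ℝ) (θ : Fin d → ℝ)
    (x : Ω₁) (y : Ω₂) : ℝ :=
  Real.exp ((∑ j, θ j * T (x, y) j) - logPartition2 p₁ p₂ T θ) * (p₁ x * p₂ y)

section Aux

variable {Ω₁ Ω₂ : Type*} [Fintype Ω₁] [Fintype Ω₂] [Nonempty Ω₁] [Nonempty Ω₂] {d : ℕ}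
  {p₁ : Ω₁ → ℝ} {p₂ : Ω₂ → ℝ} {T : Ω₁ × Ω₂ → Fin d → ℝ}

/-- unnormalized weight -/
noncomputable def Wfun (p₁ : Ω₁ → ℝ) (p₂ : Ω₂ → ℝ) (T : Ω₁ × Ω₂ → Fin d → ℝ)
    (a : Fin d → ℝ) (x : Ω₁) (y : Ω₂) : ℝ :=
  Real.exp (∑ j, a j * T (x, y) j) * (p₁ x * p₂ y)

/-- partition function -/
noncomputable def Zfun (p₁ : Ω₁ → ℝ) (p₂ : Ω₂ → ℝ) (T : Ω₁ × Ω₂ → Fin d → ℝ)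
    (a : Fin d → ℝ) : ℝ :=
  ∑ x, ∑ y, Wfun p₁ p₂ T a x y

lemma Wfun_pos (hp₁ : ∀ x, 0 < p₁ x) (hp₂ : ∀ y, 0 < p₂ y) (a : Fin d → ℝ)
    (x : Ω₁) (y : Ω₂) : 0 < Wfun p₁ p₂ T a x y :=
  mul_pos (Real.exp_pos _) (mul_pos (hp₁ x) (hp₂ y))

lemma Zfun_pos (hp₁ : ∀ x, 0 < p₁ x) (hp₂ : ∀ y, 0 < p₂ y) (a : Fin d → ℝ) :
    0 < Zfun p₁ p₂ T a :=
  Finset.sum_pos (fun x _ => Finset.sum_pos (fun y _ => Wfun_pos hp₁ hp₂ a x y)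
    Finset.univ_nonempty) Finset.univ_nonempty

lemma expFamily2_eq (hp₁ : ∀ x, 0 < p₁ x) (hp₂ : ∀ y, 0 < p₂ y) (a : Fin d → ℝ)
    (x : Ω₁) (y : Ω₂) :
    expFamily2 p₁ p₂ T a x y = Wfun p₁ p₂ T a x y / Zfun p₁ p₂ T a := by
  rw [expFamily2, logPartition2, Real.exp_sub]
  rw [show (∑ x, ∑ y, Real.exp (∑ j, a j * T (x, y) j) * (p₁ x * p₂ y))
      = Zfun p₁ p₂ T a from rfl, Real.exp_log (Zfun_pos hp₁ hp₂ a), Wfun]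
  ring

lemma expFamily2_pos (hp₁ : ∀ x, 0 < p₁ x) (hp₂ : ∀ y, 0 < p₂ y) (a : Fin d → ℝ)
    (x : Ω₁) (y : Ω₂) : 0 < expFamily2 p₁ p₂ T a x y := by
  rw [expFamily2_eq hp₁ hp₂]
  exact div_pos (Wfun_pos hp₁ hp₂ a x y) (Zfun_pos hp₁ hp₂ a)

lemma expFamily2_sum_eq_one (hp₁ : ∀ x, 0 < p₁ x) (hp₂ : ∀ y, 0 < p₂ y)
    (a : Fin d → ℝ) : ∑ x, ∑ y, expFamily2 p₁ p₂ T a x y = 1 := by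
  have : ∀ x y, expFamily2 p₁ p₂ T a x y = Wfun p₁ p₂ T a x y / Zfun p₁ p₂ T a :=
    expFamily2_eq hp₁ hp₂ a
  simp only [this, ← Finset.sum_div]
  exact div_self (Zfun_pos hp₁ hp₂ a).ne'

lemma hasDerivAt_Wfun (θ : ℝ → Fin d → ℝ) (θ' : Fin d → ℝ) (t₀ : ℝ)
    (hθ : ∀ j, HasDerivAt (fun t => θ t j) (θ' j) t₀) (x : Ω₁) (y : Ω₂) :
    HasDerivAt (fun t => Wfun p₁ p₂ T (θ t) x y)
      (Wfun p₁ p₂ T (θ t₀) x y * (∑ j, θ' j * T (x, y) j)) t₀ := by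
  have h1 : HasDerivAt (fun t => ∑ j, θ t j * T (x, y) j) (∑ j, θ' j * T (x, y) j) t₀ :=
    HasDerivAt.fun_sum fun j _ => (hθ j).mul_const _
  have := h1.exp.mul_const (p₁ x * p₂ y)
  simpa [Wfun, mul_comm, mul_assoc, mul_left_comm] using this

lemma hasDerivAt_expFamily2 (hp₁ : ∀ x, 0 < p₁ x) (hp₂ : ∀ y, 0 < p₂ y)
    (θ : ℝ → Fin d → ℝ) (θ' : Fin d → ℝ) (t₀ : ℝ)
    (hθ : ∀ j, HasDerivAt (fun t => θ t j) (θ' j) t₀) (x : Ω₁) (y : Ω₂) :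
    HasDerivAt (fun t => expFamily2 p₁ p₂ T (θ t) x y)
      (expFamily2 p₁ p₂ T (θ t₀) x y * ((∑ j, θ' j * T (x, y) j)
        - ∑ x', ∑ y', expFamily2 p₁ p₂ T (θ t₀) x' y' * (∑ j, θ' j * T (x', y') j))) t₀ := by
  have hZ : HasDerivAt (fun t => Zfun p₁ p₂ T (θ t))
      (∑ x', ∑ y', Wfun p₁ p₂ T (θ t₀) x' y' * (∑ j, θ' j * T (x', y') j)) t₀ :=
    HasDerivAt.fun_sum fun x' _ => HasDerivAt.fun_sum fun y' _ => hasDerivAt_Wfun θ θ' t₀ hθ x' y'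
  have hZpos := Zfun_pos (T := T) hp₁ hp₂ (θ t₀)
  have h := (hasDerivAt_Wfun (p₁ := p₁) (p₂ := p₂) (T := T) θ θ' t₀ hθ x y).fun_div hZ hZpos.ne'
  have heq : (fun t => Wfun p₁ p₂ T (θ t) x y / Zfun p₁ p₂ T (θ t))
      = fun t => expFamily2 p₁ p₂ T (θ t) x y := by
    funext t; rw [expFamily2_eq hp₁ hp₂]
  rw [heq] at h
  refine h.congr_deriv ?_
  rw [expFamily2_eq hp₁ hp₂]
  have hE : ∀ x' y', expFamily2 p₁ p₂ T (θ t₀) x' y' * (∑ j, θ' j * T (x', y') j)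
      = Wfun p₁ p₂ T (θ t₀) x' y' * (∑ j, θ' j * T (x', y') j) / Zfun p₁ p₂ T (θ t₀) := by
    intro x' y'; rw [expFamily2_eq hp₁ hp₂]; ring
  simp only [hE, ← Finset.sum_div]
  field_simp

end Aux

/-- Derivative of the KL divergence from the marginal `G₁(θ t)` of an exponential
family to a fixed margin `r₁`:
`(d/dt) KL(G₁(θ t) ‖ r₁) |_{t₀}
  = -∑ j, (∑ x, G₁(θ t₀)(x) · (∑ z, (T_j(x,z) - E_{G(θ t₀)}[T_j]) · G(θ t₀)(x,z)/G₁(θ t₀)(x))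
      · log (r₁ x / G₁(θ t₀)(x))) · θ'_j(t₀)`. -/
theorem KL_expFamily_marginal_to_margin_derivative {Ω₁ Ω₂ : Type*}
    [Fintype Ω₁] [Fintype Ω₂] [Nonempty Ω₁] [Nonempty Ω₂] {d : ℕ}
    (p₁ : Ω₁ → ℝ) (hp₁ : ∀ x, 0 < p₁ x) (hp₁s : ∑ x, p₁ x = 1)
    (p₂ : Ω₂ → ℝ) (hp₂ : ∀ y, 0 < p₂ y) (hp₂s : ∑ y, p₂ y = 1)
    (T : Ω₁ × Ω₂ → Fin d → ℝ)
    (r₁ : Ω₁ → ℝ) (hr₁ : ∀ x, 0 < r₁ x) (hr₁s : ∑ x, r₁ x = 1)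
    (θ : ℝ → Fin d → ℝ) (θ' : Fin d → ℝ) (t₀ : ℝ)
    (hθ : ∀ j, HasDerivAt (fun t => θ t j) (θ' j) t₀) :
    HasDerivAt
      (fun t => ∑ x, (∑ z, expFamily2 p₁ p₂ T (θ t) x z)
        * Real.log ((∑ z, expFamily2 p₁ p₂ T (θ t) x z) / r₁ x))
      (-∑ j, (∑ x, (∑ z, expFamily2 p₁ p₂ T (θ t₀) x z)
          * (∑ z, (T (x, z) j - ∑ x', ∑ y', T (x', y') j * expFamily2 p₁ p₂ T (θ t₀) x' y')
              * expFamily2 p₁ p₂ T (θ t₀) x z / (∑ z', expFamily2 p₁ p₂ T (θ t₀) x z'))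
          * Real.log (r₁ x / ∑ z, expFamily2 p₁ p₂ T (θ t₀) x z))
        * θ' j) t₀ := by
  classical
  set c : ℝ := ∑ x', ∑ y', expFamily2 p₁ p₂ T (θ t₀) x' y' * (∑ j, θ' j * T (x', y') j)
    with hcdef
  set D : Ω₁ → ℝ :=
    fun x => ∑ z, expFamily2 p₁ p₂ T (θ t₀) x z * ((∑ j, θ' j * T (x, z) j) - c) with hDdef
  have hG₁pos : ∀ (a : Fin d → ℝ) (x : Ω₁), 0 < ∑ z, expFamily2 p₁ p₂ T a x z :=
    fun a x => Finset.sum_pos (fun z _ => expFamily2_pos hp₁ hp₂ a x z) Finset.univ_nonempty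
  have hdG₁ : ∀ x, HasDerivAt (fun t => ∑ z, expFamily2 p₁ p₂ T (θ t) x z) (D x) t₀ :=
    fun x => HasDerivAt.fun_sum fun z _ => hasDerivAt_expFamily2 hp₁ hp₂ θ θ' t₀ hθ x z
  have hsumD : ∑ x, D x = 0 := by
    have h1 : HasDerivAt (fun t => ∑ x, ∑ z, expFamily2 p₁ p₂ T (θ t) x z) (∑ x, D x) t₀ :=
      HasDerivAt.fun_sum fun x _ => hdG₁ x
    have h2 : (fun t => ∑ x, ∑ z, expFamily2 p₁ p₂ T (θ t) x z) = fun _ => (1 : ℝ) :=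
      funext fun t => expFamily2_sum_eq_one hp₁ hp₂ (θ t)
    rw [h2] at h1
    exact h1.unique (hasDerivAt_const _ _)
  have hdF : HasDerivAt (fun t => ∑ x, (∑ z, expFamily2 p₁ p₂ T (θ t) x z)
      * Real.log ((∑ z, expFamily2 p₁ p₂ T (θ t) x z) / r₁ x))
      (∑ x, (D x * Real.log ((∑ z, expFamily2 p₁ p₂ T (θ t₀) x z) / r₁ x) + D x)) t₀ := by
    apply HasDerivAt.fun_sum; intro x _
    have hpos := hG₁pos (θ t₀) x
    have hratio_ne : (∑ z, expFamily2 p₁ p₂ T (θ t₀) x z) / r₁ x ≠ 0 :=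
      (div_pos hpos (hr₁ x)).ne'
    have hlog := ((hdG₁ x).div_const (r₁ x)).log hratio_ne
    have hmul := (hdG₁ x).fun_mul hlog
    convert hmul using 1
    congr 1
    rw [div_div_div_cancel_right₀ (hc := (hr₁ x).ne'), mul_div_cancel₀ _ hpos.ne']
  -- triple sum swap helper
  have swap3 : ∀ (f : Ω₁ → Ω₂ → Fin d → ℝ),
      ∑ x', ∑ y', ∑ j, f x' y' j = ∑ j, ∑ x', ∑ y', f x' y' j := by
    intro f
    calc ∑ x', ∑ y', ∑ j, f x' y' j
        = ∑ x', ∑ j, ∑ y', f x' y' j :=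
          Finset.sum_congr rfl fun x _ => Finset.sum_comm
      _ = ∑ j, ∑ x', ∑ y', f x' y' j := Finset.sum_comm
  have hcE : c = ∑ j, (∑ x', ∑ y', T (x', y') j * expFamily2 p₁ p₂ T (θ t₀) x' y') * θ' j := by
    rw [hcdef]
    simp only [Finset.mul_sum]
    rw [swap3]
    refine Finset.sum_congr rfl fun j _ => ?_
    rw [Finset.sum_mul]
    refine Finset.sum_congr rfl fun x' _ => ?_
    rw [Finset.sum_mul]
    exact Finset.sum_congr rfl fun y' _ => by ring
  have key : ∀ x, D x = ∑ j,
      (∑ z, (T (x, z) j - ∑ x', ∑ y', T (x', y') j * expFamily2 p₁ p₂ T (θ t₀) x' y')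
        * expFamily2 p₁ p₂ T (θ t₀) x z) * θ' j := by
    intro x
    rw [hDdef]
    simp only [hcE, ← Finset.sum_sub_distrib, Finset.mul_sum]
    rw [Finset.sum_comm]
    refine Finset.sum_congr rfl fun j _ => ?_
    conv_rhs => rw [Finset.sum_mul]
    exact Finset.sum_congr rfl fun z _ => by ring
  have hstep : ∀ (x : Ω₁) (j : Fin d),
      (∑ z, expFamily2 p₁ p₂ T (θ t₀) x z)
        * (∑ z, (T (x, z) j - ∑ x', ∑ y', T (x', y') j * expFamily2 p₁ p₂ T (θ t₀) x' y')
            * expFamily2 p₁ p₂ T (θ t₀) x z / (∑ z', expFamily2 p₁ p₂ T (θ t₀) x z'))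
      = ∑ z, (T (x, z) j - ∑ x', ∑ y', T (x', y') j * expFamily2 p₁ p₂ T (θ t₀) x' y')
          * expFamily2 p₁ p₂ T (θ t₀) x z := by
    intro x j
    rw [← Finset.sum_div, mul_div_cancel₀ _ (hG₁pos (θ t₀) x).ne']
  have hlogneg : ∀ x : Ω₁, Real.log (r₁ x / ∑ z, expFamily2 p₁ p₂ T (θ t₀) x z)
      = - Real.log ((∑ z, expFamily2 p₁ p₂ T (θ t₀) x z) / r₁ x) := by
    intro x
    rw [Real.log_div (hr₁ x).ne' (hG₁pos (θ t₀) x).ne',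
      Real.log_div (hG₁pos (θ t₀) x).ne' (hr₁ x).ne']
    ring
  convert hdF using 1
  rw [Finset.sum_add_distrib, hsumD, add_zero]
  simp only [hstep, hlogneg, mul_neg, Finset.sum_neg_distrib, neg_mul, neg_neg]
  simp only [key, Finset.sum_mul]
  rw [Finset.sum_comm]
  exact Finset.sum_congr rfl fun x _ => Finset.sum_congr rfl fun j _ =>
    Finset.sum_congr rfl fun z _ => by ring
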